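/- Let Φ be an N-function such that both Φ and its complementary function Φ* satisfy the Δ₂-condition. Then the following shifted Young inequality holds: for every ε > 0 there exists a constant C_ε > 0, depending only on ε and the Δ₂-constants of Φ and Φ*, such that for all a, s, t ≥ 0: Φ_a'(t)·s ≤ ε Φ_a(t) + C_ε Φ_a(s), where Φ_a'(r) = (r/(a+r)) Φ'(a+r) is the derivative of the shifted N-function. -/

import Mathlib

open MeasureTheory

/-- An N-function `Φ` with derivative `Φ'`: differentiable on `[0,∞)` with
`Φ(0) = 0`, `Φ(t) = ∫₀ᵗ Φ'(s) ds`, `Φ'` nondecreasing, right-continuous,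
`Φ'(0) = 0` and `Φ'(t) > 0` for `t > 0`. -/
structure IsNFunction (Φ Φ' : ℝ → ℝ) : Prop where
  map_zero : Φ 0 = 0
  eq_integral : ∀ t : ℝ, 0 ≤ t → Φ t = ∫ s in (0:ℝ)..t, Φ' s
  deriv_zero : Φ' 0 = 0
  deriv_pos : ∀ t : ℝ, 0 < t → 0 < Φ' t
  deriv_mono : MonotoneOn Φ' (Set.Ici 0)
  deriv_rightCont : ∀ t : ℝ, 0 ≤ t → ContinuousWithinAt Φ' (Set.Ici t) t

/-- The Δ₂-condition with constant `D`. -/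
def Delta2 (Φ : ℝ → ℝ) (D : ℝ) : Prop := ∀ t : ℝ, 0 < t → Φ (2 * t) ≤ D * Φ t

/-- Derivative of the shifted N-function: `Φ_a'(t) = (t/(a+t)) Φ'(a+t)`. -/
noncomputable def shiftDeriv (Φ' : ℝ → ℝ) (a t : ℝ) : ℝ := t / (a + t) * Φ' (a + t)

/-- The shifted N-function `Φ_a(t) = ∫₀ᵗ (s/(a+s)) Φ'(a+s) ds`. -/
noncomputable def shiftN (Φ' : ℝ → ℝ) (a t : ℝ) : ℝ := ∫ s in (0:ℝ)..t, shiftDeriv Φ' a s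

/-- The (generalized) inverse `(Φ')⁻¹(t) = sup {s ≥ 0 : Φ'(s) ≤ t}`. -/
noncomputable def invDeriv (Φ' : ℝ → ℝ) (t : ℝ) : ℝ := sSup {s : ℝ | 0 ≤ s ∧ Φ' s ≤ t}

/-- The complementary N-function `Φ*(t) = ∫₀ᵗ (Φ')⁻¹(s) ds`. -/
noncomputable def complementary (Φ' : ℝ → ℝ) (t : ℝ) : ℝ := ∫ s in (0:ℝ)..t, invDeriv Φ' s

section Aux

variable {Φ Φ' : ℝ → ℝ}

private lemma uIcc_sub_Ici {u v : ℝ} (hu : 0 ≤ u) (hv : 0 ≤ v) :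
    Set.uIcc u v ⊆ Set.Ici 0 := by
  intro x hx
  rcases Set.mem_uIcc.1 hx with ⟨h1, _⟩ | ⟨h1, _⟩
  · exact le_trans hu h1
  · exact le_trans hv h1

private lemma deriv_nonneg' (hN : IsNFunction Φ Φ') {t : ℝ} (ht : 0 ≤ t) : 0 ≤ Φ' t := by
  have := hN.deriv_mono (Set.mem_Ici.2 (le_refl (0:ℝ))) (Set.mem_Ici.2 ht) ht
  rwa [hN.deriv_zero] at this

private lemma deriv_intInt (hN : IsNFunction Φ Φ') {u v : ℝ} (hu : 0 ≤ u) (hv : 0 ≤ v) :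
    IntervalIntegrable Φ' volume u v :=
  (hN.deriv_mono.mono (uIcc_sub_Ici hu hv)).intervalIntegrable

private lemma Phi_nonneg (hN : IsNFunction Φ Φ') {t : ℝ} (ht : 0 ≤ t) : 0 ≤ Φ t := by
  rw [hN.eq_integral t ht]
  exact intervalIntegral.integral_nonneg ht (fun x hx => deriv_nonneg' hN hx.1)

private lemma Phi_mono (hN : IsNFunction Φ Φ') {u v : ℝ} (hu : 0 ≤ u) (huv : u ≤ v) :
    Φ u ≤ Φ v := by
  have hv : 0 ≤ v := le_trans hu huv
  rw [hN.eq_integral u hu, hN.eq_integral v hv,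
    ← intervalIntegral.integral_add_adjacent_intervals (deriv_intInt hN le_rfl hu)
      (deriv_intInt hN hu hv)]
  have : 0 ≤ ∫ s in u..v, Φ' s :=
    intervalIntegral.integral_nonneg huv (fun x hx => deriv_nonneg' hN (le_trans hu hx.1))
  linarith

private lemma Phi_le_mul (hN : IsNFunction Φ Φ') {t : ℝ} (ht : 0 ≤ t) : Φ t ≤ t * Φ' t := by
  rw [hN.eq_integral t ht]
  calc (∫ s in (0:ℝ)..t, Φ' s) ≤ ∫ _ in (0:ℝ)..t, Φ' t := by
        refine intervalIntegral.integral_mono_on ht (deriv_intInt hN le_rfl ht)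
          intervalIntegrable_const (fun x hx => hN.deriv_mono hx.1 (Set.mem_Ici.2 ht) hx.2)
    _ = t * Φ' t := by simp [mul_comm]

/-- From the Δ₂ condition: `Φ'(4r) ≤ D'^3 Φ'(r)` where `D' = max D 1`. -/
private lemma deriv_four (hN : IsNFunction Φ Φ') {D : ℝ} (hΔ : Delta2 Φ D) {r : ℝ}
    (hr : 0 ≤ r) : Φ' (4 * r) ≤ (max D 1) ^ 3 * Φ' r := by
  set D' := max D 1 with hD'
  have hD1 : (1:ℝ) ≤ D' := le_max_right _ _
  rcases eq_or_lt_of_le hr with h | hrpos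
  · rw [← h]; simp [hN.deriv_zero]
  have hdbl : ∀ u : ℝ, 0 < u → Φ (2 * u) ≤ D' * Φ u := fun u hu =>
    le_trans (hΔ u hu) (mul_le_mul_of_nonneg_right (le_max_left _ _) (Phi_nonneg hN hu.le))
  have h8 : Φ (8 * r) ≤ D' ^ 3 * Φ r := by
    have h1 := hdbl r hrpos
    have h2 := hdbl (2 * r) (by linarith)
    have h4 := hdbl (4 * r) (by linarith)
    have e2 : 2 * (2 * r) = 4 * r := by ring
    have e4 : 2 * (4 * r) = 8 * r := by ring
    rw [e2] at h2; rw [e4] at h4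
    have hD0 : (0:ℝ) ≤ D' := by linarith
    nlinarith [Phi_nonneg hN hrpos.le, Phi_nonneg hN (show (0:ℝ) ≤ 2 * r by linarith),
      mul_le_mul_of_nonneg_left h2 hD0, mul_le_mul_of_nonneg_left h1 (mul_nonneg hD0 hD0)]
  have key : r * Φ' (4 * r) ≤ Φ (8 * r) := by
    have hstep : r * Φ' (4 * r) ≤ ∫ s in (4*r)..(5*r), Φ' s := by
      calc r * Φ' (4 * r) = ∫ _ in (4*r)..(5*r), Φ' (4 * r) := by
            rw [intervalIntegral.integral_const, smul_eq_mul]; ring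
        _ ≤ ∫ s in (4*r)..(5*r), Φ' s := by
            refine intervalIntegral.integral_mono_on (by linarith) intervalIntegrable_const
              (deriv_intInt hN (by linarith) (by linarith))
              (fun x hx => hN.deriv_mono (Set.mem_Ici.2 (by linarith))
                (Set.mem_Ici.2 (by linarith [hx.1])) hx.1)
    have hsplit : Φ (4 * r) + ∫ s in (4*r)..(5*r), Φ' s = Φ (5 * r) := by
      rw [hN.eq_integral (4*r) (by linarith), hN.eq_integral (5*r) (by linarith)]
      exact intervalIntegral.integral_add_adjacent_intervals
        (deriv_intInt hN le_rfl (by linarith)) (deriv_intInt hN (by linarith) (by linarith))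
    have h58 : Φ (5 * r) ≤ Φ (8 * r) := Phi_mono hN (by linarith) (by linarith)
    have h4n : 0 ≤ Φ (4 * r) := Phi_nonneg hN (by linarith)
    linarith
  have hfin : r * Φ' (4 * r) ≤ D' ^ 3 * (r * Φ' r) := by
    calc r * Φ' (4 * r) ≤ Φ (8 * r) := key
      _ ≤ D' ^ 3 * Φ r := h8
      _ ≤ D' ^ 3 * (r * Φ' r) := by
          refine mul_le_mul_of_nonneg_left (Phi_le_mul hN hr) (by positivity)
  have := (mul_le_mul_iff_right₀ hrpos).1 (by linarith : r * Φ' (4 * r) ≤ r * (D' ^ 3 * Φ' r))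
  linarith

/-! ### Shifted function facts -/

private lemma sd_nonneg (hN : IsNFunction Φ Φ') {a t : ℝ} (ha : 0 ≤ a) (ht : 0 ≤ t) :
    0 ≤ shiftDeriv Φ' a t :=
  mul_nonneg (div_nonneg ht (by linarith)) (deriv_nonneg' hN (by linarith))

private lemma sd_mono (hN : IsNFunction Φ Φ') {a : ℝ} (ha : 0 ≤ a) :
    MonotoneOn (shiftDeriv Φ' a) (Set.Ici 0) := by
  intro x hx y hy hxy
  simp only [Set.mem_Ici] at hx hy
  rcases eq_or_lt_of_le hx with h | hxpos
  · have : shiftDeriv Φ' a x = 0 := by rw [← h]; simp [shiftDeriv]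
    rw [this]; exact sd_nonneg hN ha hy
  have hax : 0 < a + x := by linarith
  have hay : 0 < a + y := by linarith
  refine mul_le_mul ?_ (hN.deriv_mono (Set.mem_Ici.2 (by linarith)) (Set.mem_Ici.2 (by linarith))
    (by linarith)) (deriv_nonneg' hN (by linarith)) (div_nonneg (by linarith) (by linarith))
  rw [div_le_div_iff₀ hax hay]
  nlinarith

private lemma sd_intInt (hN : IsNFunction Φ Φ') {a u v : ℝ} (ha : 0 ≤ a) (hu : 0 ≤ u)
    (hv : 0 ≤ v) : IntervalIntegrable (shiftDeriv Φ' a) volume u v :=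
  ((sd_mono hN ha).mono (uIcc_sub_Ici hu hv)).intervalIntegrable

private lemma sN_nonneg (hN : IsNFunction Φ Φ') {a t : ℝ} (ha : 0 ≤ a) (ht : 0 ≤ t) :
    0 ≤ shiftN Φ' a t :=
  intervalIntegral.integral_nonneg ht (fun x hx => sd_nonneg hN ha hx.1)

private lemma sN_mono (hN : IsNFunction Φ Φ') {a u v : ℝ} (ha : 0 ≤ a) (hu : 0 ≤ u)
    (huv : u ≤ v) : shiftN Φ' a u ≤ shiftN Φ' a v := by
  have hv : 0 ≤ v := le_trans hu huv
  unfold shiftN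
  rw [← intervalIntegral.integral_add_adjacent_intervals (sd_intInt hN ha le_rfl hu)
    (sd_intInt hN ha hu hv)]
  have : 0 ≤ ∫ s in u..v, shiftDeriv Φ' a s :=
    intervalIntegral.integral_nonneg huv (fun x hx => sd_nonneg hN ha (le_trans hu hx.1))
  linarith

/-- `t Φ_a'(t) ≤ Φ_a(2t)`. -/
private lemma mul_le_sN_two (hN : IsNFunction Φ Φ') {a t : ℝ} (ha : 0 ≤ a) (ht : 0 ≤ t) :
    t * shiftDeriv Φ' a t ≤ shiftN Φ' a (2 * t) := by
  have h1 : t * shiftDeriv Φ' a t ≤ ∫ s in t..(2*t), shiftDeriv Φ' a s := by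
    calc t * shiftDeriv Φ' a t = ∫ _ in t..(2*t), shiftDeriv Φ' a t := by
          rw [intervalIntegral.integral_const, smul_eq_mul]; ring
      _ ≤ ∫ s in t..(2*t), shiftDeriv Φ' a s := by
          refine intervalIntegral.integral_mono_on (by linarith) intervalIntegrable_const
            (sd_intInt hN ha ht (by linarith))
            (fun x hx => sd_mono hN ha (Set.mem_Ici.2 ht) (Set.mem_Ici.2 (by linarith [hx.1]))
              hx.1)
  have h2 : shiftN Φ' a t + ∫ s in t..(2*t), shiftDeriv Φ' a s = shiftN Φ' a (2 * t) :=
    intervalIntegral.integral_add_adjacent_intervals (sd_intInt hN ha le_rfl ht)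
      (sd_intInt hN ha ht (by linarith))
  have h3 : 0 ≤ shiftN Φ' a t := sN_nonneg hN ha ht
  linarith

/-- `Φ_a(t) ≤ t Φ_a'(t)`. -/
private lemma sN_le_mul (hN : IsNFunction Φ Φ') {a t : ℝ} (ha : 0 ≤ a) (ht : 0 ≤ t) :
    shiftN Φ' a t ≤ t * shiftDeriv Φ' a t := by
  calc shiftN Φ' a t ≤ ∫ _ in (0:ℝ)..t, shiftDeriv Φ' a t := by
        refine intervalIntegral.integral_mono_on ht (sd_intInt hN ha le_rfl ht)
          intervalIntegrable_const
          (fun x hx => sd_mono hN ha (Set.mem_Ici.2 hx.1) (Set.mem_Ici.2 ht) hx.2)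
    _ = t * shiftDeriv Φ' a t := by
        rw [intervalIntegral.integral_const, smul_eq_mul]; ring

/-- `Φ_a'(2t) ≤ 4 D'^3 Φ_a'(t/2)`. -/
private lemma sd_double (hN : IsNFunction Φ Φ') {D : ℝ} (hΔ : Delta2 Φ D) {a t : ℝ}
    (ha : 0 ≤ a) (ht : 0 ≤ t) :
    shiftDeriv Φ' a (2 * t) ≤ 4 * (max D 1) ^ 3 * shiftDeriv Φ' a (t / 2) := by
  set D' := max D 1 with hD'
  have hD1 : (1:ℝ) ≤ D' := le_max_right _ _
  rcases eq_or_lt_of_le ht with h | htpos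
  · rw [← h]; simp [shiftDeriv]
  have h2 : 0 < a + 2 * t := by linarith
  have hh : 0 < a + t / 2 := by linarith
  have hfront : (2 * t) / (a + 2 * t) ≤ 4 * ((t / 2) / (a + t / 2)) := by
    rw [show 4 * ((t / 2) / (a + t / 2)) = (2 * t) / (a + t / 2) by ring]
    exact div_le_div_of_nonneg_left (by linarith) hh (by linarith)
  have hphi : Φ' (a + 2 * t) ≤ D' ^ 3 * Φ' (a + t / 2) := by
    have hmono : Φ' (a + 2 * t) ≤ Φ' (4 * (a + t / 2)) :=
      hN.deriv_mono (Set.mem_Ici.2 h2.le) (Set.mem_Ici.2 (by linarith)) (by linarith)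
    exact le_trans hmono (deriv_four hN hΔ hh.le)
  have h0a : 0 ≤ Φ' (a + 2 * t) := deriv_nonneg' hN h2.le
  have h0f : 0 ≤ 4 * ((t / 2) / (a + t / 2)) := by positivity
  calc shiftDeriv Φ' a (2 * t) = (2 * t) / (a + 2 * t) * Φ' (a + 2 * t) := rfl
    _ ≤ (4 * ((t / 2) / (a + t / 2))) * (D' ^ 3 * Φ' (a + t / 2)) := by
        refine mul_le_mul hfront hphi h0a ?_
        positivity
    _ = 4 * D' ^ 3 * shiftDeriv Φ' a (t / 2) := by unfold shiftDeriv; ring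

/-- Uniform Δ₂ for the shifted function: `Φ_a(2t) ≤ 16 D'^3 Φ_a(t)`. -/
private lemma sN_double (hN : IsNFunction Φ Φ') {D : ℝ} (hΔ : Delta2 Φ D) {a t : ℝ}
    (ha : 0 ≤ a) (ht : 0 ≤ t) :
    shiftN Φ' a (2 * t) ≤ 16 * (max D 1) ^ 3 * shiftN Φ' a t := by
  set D' := max D 1 with hD'
  have hD1 : (1:ℝ) ≤ D' := le_max_right _ _
  have h1 : shiftN Φ' a (2 * t) ≤ (2 * t) * shiftDeriv Φ' a (2 * t) :=
    sN_le_mul hN ha (by linarith)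
  have h2 : shiftDeriv Φ' a (2 * t) ≤ 4 * D' ^ 3 * shiftDeriv Φ' a (t / 2) :=
    sd_double hN hΔ ha ht
  have h3 : (t / 2) * shiftDeriv Φ' a (t / 2) ≤ shiftN Φ' a (2 * (t / 2)) :=
    mul_le_sN_two hN ha (by linarith)
  rw [show 2 * (t / 2) = t by ring] at h3
  have h4 : 0 ≤ shiftDeriv Φ' a (t / 2) := sd_nonneg hN ha (by linarith)
  calc shiftN Φ' a (2 * t) ≤ (2 * t) * shiftDeriv Φ' a (2 * t) := h1
    _ ≤ (2 * t) * (4 * D' ^ 3 * shiftDeriv Φ' a (t / 2)) :=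
        mul_le_mul_of_nonneg_left h2 (by linarith)
    _ = (16 * D' ^ 3) * ((t / 2) * shiftDeriv Φ' a (t / 2)) := by ring
    _ ≤ 16 * D' ^ 3 * shiftN Φ' a t :=
        mul_le_mul_of_nonneg_left h3 (by positivity)

/-- Iterated doubling. -/
private lemma sN_pow (hN : IsNFunction Φ Φ') {D : ℝ} (hΔ : Delta2 Φ D) {a s : ℝ}
    (ha : 0 ≤ a) (hs : 0 ≤ s) (m : ℕ) :
    shiftN Φ' a (2 ^ m * s) ≤ (16 * (max D 1) ^ 3) ^ m * shiftN Φ' a s := by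
  set K := 16 * (max D 1) ^ 3 with hK
  have hKpos : (0:ℝ) < K := by
    have : (1:ℝ) ≤ max D 1 := le_max_right _ _
    positivity
  induction m with
  | zero => simp
  | succ m ih =>
    have hstep : shiftN Φ' a (2 ^ (m + 1) * s) ≤ K * shiftN Φ' a (2 ^ m * s) := by
      rw [show (2:ℝ) ^ (m + 1) * s = 2 * (2 ^ m * s) by ring]
      exact sN_double hN hΔ ha (by positivity)
    calc shiftN Φ' a (2 ^ (m + 1) * s) ≤ K * shiftN Φ' a (2 ^ m * s) := hstep
      _ ≤ K * ((K : ℝ) ^ m * shiftN Φ' a s) := by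
          exact mul_le_mul_of_nonneg_left ih hKpos.le
      _ = K ^ (m + 1) * shiftN Φ' a s := by ring

end Aux

/-- shifted Young inequality: for every `ε > 0` there is `C_ε > 0`,
depending only on `ε` and the Δ₂-constants of `Φ` and `Φ*`, such that
`Φ_a'(t) s ≤ ε Φ_a(t) + C_ε Φ_a(s)` for all `a, s, t ≥ 0`. -/
theorem statement4 (D Dstar : ℝ) (hD : 0 < D) (hDstar : 0 < Dstar) :
    ∀ ε : ℝ, 0 < ε →
      ∃ Cε : ℝ, 0 < Cε ∧
        ∀ (Φ Φ' : ℝ → ℝ),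
          IsNFunction Φ Φ' →
          Delta2 Φ D →
          Delta2 (complementary Φ') Dstar →
          ∀ a s t : ℝ, 0 ≤ a → 0 ≤ s → 0 ≤ t →
            shiftDeriv Φ' a t * s ≤ ε * shiftN Φ' a t + Cε * shiftN Φ' a s := by
  intro ε hε
  set D' := max D 1 with hD'
  have hD1 : (1:ℝ) ≤ D' := le_max_right _ _
  set K := 16 * D' ^ 3 with hK
  have hKpos : (0:ℝ) < K := by positivity
  set δ := min ε 1 / K with hδ
  have hδpos : 0 < δ := by
    apply div_pos (lt_min hε one_pos) hKpos
  obtain ⟨m, hm⟩ := pow_unbounded_of_one_lt (2 / δ) (one_lt_two (α := ℝ))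
  refine ⟨δ * K ^ m, by positivity, ?_⟩
  intro Φ Φ' hN hΔ _ a s t ha hs ht
  have hsNt : 0 ≤ shiftN Φ' a t := sN_nonneg hN ha ht
  have hsNs : 0 ≤ shiftN Φ' a s := sN_nonneg hN ha hs
  have hδK : δ * K = min ε 1 := by rw [hδ]; exact div_mul_cancel₀ _ hKpos.ne'
  by_cases hcase : s ≤ δ * t
  · -- small s : absorb into ε Φ_a(t)
    have h1 : shiftDeriv Φ' a t * s ≤ shiftDeriv Φ' a t * (δ * t) :=
      mul_le_mul_of_nonneg_left hcase (sd_nonneg hN ha ht)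
    have h2 : t * shiftDeriv Φ' a t ≤ shiftN Φ' a (2 * t) := mul_le_sN_two hN ha ht
    have h3 : shiftN Φ' a (2 * t) ≤ K * shiftN Φ' a t := sN_double hN hΔ ha ht
    have h4 : shiftDeriv Φ' a t * (δ * t) = δ * (t * shiftDeriv Φ' a t) := by ring
    have h5 : δ * (t * shiftDeriv Φ' a t) ≤ δ * (K * shiftN Φ' a t) := by
      refine mul_le_mul_of_nonneg_left (le_trans h2 h3) hδpos.le
    have h6 : δ * (K * shiftN Φ' a t) = (δ * K) * shiftN Φ' a t := by ring
    have h7 : (δ * K) * shiftN Φ' a t ≤ ε * shiftN Φ' a t := by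
      refine mul_le_mul_of_nonneg_right ?_ hsNt
      rw [hδK]; exact min_le_left _ _
    have h8 : 0 ≤ δ * K ^ m * shiftN Φ' a s := by positivity
    linarith [h1, h4, h5, h6, h7, h8]
  · -- large s
    push_neg at hcase
    have hts : t ≤ s / δ := by
      rw [le_div_iff₀ hδpos]
      nlinarith
    have hsδ : 0 ≤ s / δ := by positivity
    have h1 : shiftDeriv Φ' a t ≤ shiftDeriv Φ' a (s / δ) :=
      sd_mono hN ha (Set.mem_Ici.2 ht) (Set.mem_Ici.2 hsδ) hts
    have h2 : shiftDeriv Φ' a t * s ≤ shiftDeriv Φ' a (s / δ) * s :=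
      mul_le_mul_of_nonneg_right h1 hs
    have h3 : shiftDeriv Φ' a (s / δ) * s = δ * ((s / δ) * shiftDeriv Φ' a (s / δ)) := by
      field_simp
    have h4 : (s / δ) * shiftDeriv Φ' a (s / δ) ≤ shiftN Φ' a (2 * (s / δ)) :=
      mul_le_sN_two hN ha hsδ
    have h5 : shiftN Φ' a (2 * (s / δ)) ≤ shiftN Φ' a (2 ^ m * s) := by
      refine sN_mono hN ha (by positivity) ?_
      have : 2 * (s / δ) = (2 / δ) * s := by ring
      rw [this]
      exact mul_le_mul_of_nonneg_right hm.le hs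
    have h6 : shiftN Φ' a (2 ^ m * s) ≤ K ^ m * shiftN Φ' a s := sN_pow hN hΔ ha hs m
    have h7 : 0 ≤ ε * shiftN Φ' a t := by positivity
    calc shiftDeriv Φ' a t * s ≤ δ * ((s / δ) * shiftDeriv Φ' a (s / δ)) := by
          rw [← h3]; exact h2
      _ ≤ δ * (K ^ m * shiftN Φ' a s) := by
          refine mul_le_mul_of_nonneg_left (le_trans h4 (le_trans h5 h6)) hδpos.le
      _ = δ * K ^ m * shiftN Φ' a s := by ring
      _ ≤ ε * shiftN Φ' a t + δ * K ^ m * shiftN Φ' a s := by linarith
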